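/- Let D be a unital C*-algebra that contains two isometries s, t with s*t = 0, and suppose D contains a unital copy of the Cuntz algebra O₂. Let p, q ∈ D be projections such that there exist isometries s₁, s₂ ∈ D with s₁s₁* ≤ p and s₂s₂* ≤ 1 − p, and isometries t₁, t₂ ∈ D with t₁t₁* ≤ q and t₂t₂* ≤ 1 − q, such that [p]₀ = 0 and [q]₀ = 0 in K₀(D). If moreover there exist isometries r₁, r₂ ∈ D with r₁r₁* ≤ p, r₂r₂* ≤ q and ‖r₁*r₂‖ < 1, then p and q are homotopic in the set of projections of D. -/
import Mathlib


/-- A projection in a *-ring. -/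
def IsProjectionElem {D : Type*} [Mul D] [Star D] (p : D) : Prop :=
  p * p = p ∧ star p = p

/-- Murray–von Neumann equivalence: `p = v* v` and `q = v v*`. -/
def MvNEquiv {D : Type*} [Mul D] [Star D] (p q : D) : Prop :=
  ∃ v : D, star v * v = p ∧ v * star v = q

/-- Two projections are homotopic if they are joined by a norm-continuous path of
projections. -/
def ProjHomotopic {D : Type*} [TopologicalSpace D] [Mul D] [Star D] (p q : D) : Prop :=
  ∃ f : C(unitInterval, D), (∀ t, IsProjectionElem (f t)) ∧ f 0 = p ∧ f 1 = q

/-- A unitary element of a unital *-ring. -/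
def IsUnitaryElem {D : Type*} [Monoid D] [Star D] (u : D) : Prop :=
  star u * u = 1 ∧ u * star u = 1

/-- Two unitaries are homotopic if they are joined by a norm-continuous path of
unitaries; `UnitaryHomotopic u 1` says `u ∈ U₀(D)`. -/
def UnitaryHomotopic {D : Type*} [TopologicalSpace D] [Monoid D] [Star D] (u v : D) : Prop :=
  ∃ f : C(unitInterval, D), (∀ t, IsUnitaryElem (f t)) ∧ f 0 = u ∧ f 1 = v

/-- The class of a projection `p ∈ D` vanishes in `K₀(D)`: after adding a suitable
`1ₙ`, `p ⊕ 1ₙ` is Murray–von Neumann equivalent to `0 ⊕ 1ₙ` in `M_{n+1}(D)`. -/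
def K0ElemClassZero {D : Type*} [Ring D] [StarRing D] (p : D) : Prop :=
  ∃ n : ℕ, MvNEquiv
    (Matrix.diagonal (fun i : Fin (n + 1) => if i = 0 then p else 1))
    (Matrix.diagonal (fun i : Fin (n + 1) => if i = 0 then 0 else 1))

/-- `K₀(D) = 0`: every projection over a matrix algebra of `D` has vanishing class. -/
def K0Trivial (D : Type*) [Ring D] [StarRing D] : Prop :=
  ∀ (k : ℕ) (P : Matrix (Fin k) (Fin k) D), IsProjectionElem P →
    ∃ n : ℕ, MvNEquiv
      (Matrix.fromBlocks P 0 0 (1 : Matrix (Fin n) (Fin n) D))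
      (Matrix.fromBlocks 0 0 0 (1 : Matrix (Fin n) (Fin n) D))

/-- `K₁(D) = 0`: every unitary matrix over `D` is, after stabilization by `1ₙ`,
homotopic to the identity through unitaries. -/
def K1Trivial (D : Type*) [Ring D] [StarRing D] [TopologicalSpace D] : Prop :=
  ∀ (k : ℕ) (U : Matrix (Fin k) (Fin k) D), IsUnitaryElem U →
    ∃ n : ℕ, UnitaryHomotopic
      (Matrix.fromBlocks U 0 0 (1 : Matrix (Fin n) (Fin n) D))
      (1 : Matrix (Fin k ⊕ Fin n) (Fin k ⊕ Fin n) D)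

/-- A splitting projection: a projection `p` dominating the range projection of an
isometry and with `1 - p` dominating the range projection of an isometry. -/
def IsSplittingProjection {D : Type*} [Ring D] [StarRing D] [PartialOrder D] (p : D) : Prop :=
  IsProjectionElem p ∧ ∃ s t : D, star s * s = 1 ∧ star t * t = 1 ∧
    s * star s ≤ p ∧ t * star t ≤ 1 - p

/-- `D` is `K₁`-injective: the canonical map `U(D)/U₀(D) → K₁(D)` is injective, i.e.
a unitary of `D` which becomes connected to `1` after stabilizing by a `1ₙ` is already
in `U₀(D)`. -/
def K1Injective (D : Type*) [Ring D] [StarRing D] [TopologicalSpace D] : Prop :=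
  ∀ u : D, IsUnitaryElem u →
    (∃ n : ℕ, UnitaryHomotopic
      (Matrix.diagonal (fun i : Fin (n + 1) => if i = 0 then u else 1))
      (1 : Matrix (Fin (n + 1)) (Fin (n + 1)) D)) →
    UnitaryHomotopic u (1 : D)

namespace CHaux

variable {D : Type*} [CStarAlgebra D]

lemma rearr {a b c : D} (h : a * b = c) (x : D) : a * (b * x) = c * x := by
  rw [← mul_assoc, h]

lemma star_mul_self_zero {x : D} (h : star x * x = 0) : x = 0 :=
  (CStarRing.star_mul_self_eq_zero_iff x).mp h

lemma range_proj (v : D) (hv : star v * v = 1) : IsProjectionElem (v * star v) :=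
  ⟨by rw [mul_assoc, rearr hv, one_mul], by simp [star_mul, mul_assoc]⟩

/-- partial isometry: `x * P = x` when `star x * x = P` is a projection. -/
lemma pi_right {x P : D} (hP : P * P = P) (hPs : star P = P) (h : star x * x = P) :
    x * P = x := by
  have key : star (x * P - x) * (x * P - x) = 0 := by
    have : star (x * P - x) * (x * P - x)
        = P * (star x * x) * P - P * (star x * x) - star x * x * P + star x * x := by
      simp only [star_sub, star_mul, hPs, sub_mul, mul_sub]
      noncomm_ring
    rw [this, h, hP]
    rw [hP]
    abel
  exact sub_eq_zero.mp (star_mul_self_zero key)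

/-- `Q * x = x` when `star x * x = P` proj and `x * star x = Q`. -/
lemma pi_left {x P Q : D} (hP : P * P = P) (hPs : star P = P) (h1 : star x * x = P)
    (h2 : x * star x = Q) : Q * x = x := by
  have hx : x * P = x := pi_right hP hPs h1
  calc Q * x = x * (star x * x) := by rw [← h2, mul_assoc]
    _ = x := by rw [h1, hx]

lemma proj_of_mvn_right {x P Q : D} (hP : IsProjectionElem P) (h1 : star x * x = P)
    (h2 : x * star x = Q) : IsProjectionElem Q := by
  have hx : x * P = x := pi_right hP.1 hP.2 h1
  constructor
  · rw [← h2, mul_assoc, ← mul_assoc (star x), h1, ← mul_assoc, hx, h2]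
  · rw [← h2]; simp [star_mul, mul_assoc]

lemma mvn_symm {P Q : D} (h : MvNEquiv P Q) : MvNEquiv Q P := by
  obtain ⟨v, h1, h2⟩ := h
  exact ⟨star v, by simpa using h2, by simpa using h1⟩

lemma mvn_trans {P Q R : D} (hP : IsProjectionElem P) (h : MvNEquiv P Q) (h' : MvNEquiv Q R) :
    MvNEquiv P R := by
  obtain ⟨v, h1, h2⟩ := h
  obtain ⟨w, h3, h4⟩ := h'
  have hQ : IsProjectionElem Q := proj_of_mvn_right hP h1 h2
  have hv : Q * v = v := pi_left hP.1 hP.2 h1 h2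
  have hw : w * Q = w := pi_right hQ.1 hQ.2 h3
  refine ⟨w * v, ?_, ?_⟩
  · have e1 : star (w * v) * (w * v) = star v * (star w * (w * v)) := by
      simp [star_mul, mul_assoc]
    rw [e1, ← mul_assoc (star w), h3, hv, h1]
  · have e2 : w * v * star (w * v) = w * (v * (star v * star w)) := by
      simp [star_mul, mul_assoc]
    rw [e2, rearr h2, ← mul_assoc, hw, h4]

lemma mvn_sum {P P' Q Q' : D} (hP : IsProjectionElem P) (hP' : IsProjectionElem P')
    (hPP' : P * P' = 0) (hQQ' : Q * Q' = 0)
    (h : MvNEquiv P Q) (h' : MvNEquiv P' Q') : MvNEquiv (P + P') (Q + Q') := by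
  obtain ⟨v, h1, h2⟩ := h
  obtain ⟨w, h3, h4⟩ := h'
  have hQ : IsProjectionElem Q := proj_of_mvn_right hP h1 h2
  have hQ' : IsProjectionElem Q' := proj_of_mvn_right hP' h3 h4
  have hvP : v * P = v := pi_right hP.1 hP.2 h1
  have hwP : w * P' = w := pi_right hP'.1 hP'.2 h3
  have hQv : Q * v = v := pi_left hP.1 hP.2 h1 h2
  have hQw : Q' * w = w := pi_left hP'.1 hP'.2 h3 h4
  have hsv : star v * Q = star v := by rw [← hQ.2, ← star_mul, hQv]
  have hsw : P' * star w = star w := by rw [← hP'.2, ← star_mul, hwP]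
  have c1 : star v * w = 0 := by
    have e : star v * w = star v * Q * (Q' * w) := by rw [hsv, hQw]
    rw [e, mul_assoc, ← mul_assoc Q, hQQ', zero_mul, mul_zero]
  have c2 : v * star w = 0 := by
    have e : v * star w = v * P * (P' * star w) := by rw [hvP, hsw]
    rw [e, mul_assoc, ← mul_assoc P, hPP', zero_mul, mul_zero]
  refine ⟨v + w, ?_, ?_⟩
  · have c1' : star w * v = 0 := by
      have := congrArg star c1; simpa [star_mul] using this
    simp only [star_add, add_mul, mul_add, h1, h3, c1, c1']
    abel
  · have c2' : w * star v = 0 := by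
      have := congrArg star c2; simpa [star_mul] using this
    simp only [star_add, add_mul, mul_add, h2, h4, c2, c2']
    abel

def HtpyProj {D : Type*} [TopologicalSpace D] [Mul D] [Star D] (p q : D) : Prop :=
  ∃ γ : Path p q, ∀ t, IsProjectionElem (γ t)

lemma HtpyProj.symm {p q : D} (h : HtpyProj p q) : HtpyProj q p := by
  obtain ⟨γ, hγ⟩ := h
  exact ⟨γ.symm, fun t => by rw [Path.symm_apply]; exact hγ _⟩

lemma HtpyProj.trans {p q r : D} (h : HtpyProj p q) (h' : HtpyProj q r) : HtpyProj p r := by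
  obtain ⟨γ, hγ⟩ := h
  obtain ⟨γ', hγ'⟩ := h'
  refine ⟨γ.trans γ', fun t => ?_⟩
  rw [Path.trans_apply]
  split_ifs <;> [exact hγ _; exact hγ' _]

lemma HtpyProj.projHomotopic {p q : D} (h : HtpyProj p q) : ProjHomotopic p q := by
  obtain ⟨γ, hγ⟩ := h
  exact ⟨γ.toContinuousMap, fun t => hγ t, γ.source, γ.target⟩

/-- Orthogonal MvN-equivalent projections are homotopic. -/
lemma htpy_of_orth_mvn {P Q : D} (hP : IsProjectionElem P) (hPQ : P * Q = 0)
    (h : MvNEquiv P Q) : HtpyProj P Q := by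
  obtain ⟨v, h1, h2⟩ := h
  have hQ : IsProjectionElem Q := proj_of_mvn_right hP h1 h2
  have hvP : v * P = v := pi_right hP.1 hP.2 h1
  have hQv : Q * v = v := pi_left hP.1 hP.2 h1 h2
  have hQP : Q * P = 0 := by
    have := congrArg star hPQ; simpa [star_mul, hP.2, hQ.2] using this
  have hPv : P * v = 0 := by
    have e : P * v = P * (Q * v) := by rw [hQv]
    rw [e, ← mul_assoc, hPQ, zero_mul]
  have hvQ : v * Q = 0 := by
    have e : v * Q = v * (P * Q) := by rw [← mul_assoc, hvP]
    rw [e, hPQ, mul_zero]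
  have hvv : v * v = 0 := by
    have e : v * v = v * Q * v := by rw [mul_assoc, hQv]
    rw [e, hvQ, zero_mul]
  have hsvQ : star v * Q = star v := by rw [← hQ.2, ← star_mul, hQv]
  have hPsv : P * star v = star v := by rw [← hP.2, ← star_mul, hvP]
  have hsvP : star v * P = 0 := by
    have := congrArg star hPv; simpa [star_mul, hP.2] using this
  have hQsv : Q * star v = 0 := by
    have := congrArg star hvQ; simpa [star_mul, hQ.2] using this
  have hsvsv : star v * star v = 0 := by
    have := congrArg star hvv; simpa [star_mul] using this
  -- the selfadjoint idempotent implementing the flip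
  set E : D := (2⁻¹ : ℂ) • (P + Q - v - star v) with hE
  have hEsa : star E = E := by
    rw [hE, star_smul, star_sub, star_sub, star_add, hP.2, hQ.2, star_star,
      show (star (2⁻¹ : ℂ)) = (2⁻¹ : ℂ) by norm_num]
    congr 1
    abel
  have hXX : (P + Q - v - star v) * (P + Q - v - star v)
      = (2:ℂ) • (P + Q - v - star v) := by
    have expand : (P + Q - v - star v) * (P + Q - v - star v)
        = P * P + P * Q - P * v - P * star v
        + (Q * P + Q * Q - Q * v - Q * star v)
        - (v * P + v * Q - v * v - v * star v)
        - (star v * P + star v * Q - star v * v - star v * star v) := by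
      noncomm_ring
    rw [expand, hP.1, hPQ, hPv, hPsv, hQP, hQ.1, hQv, hQsv, hvP, hvQ, hvv, h2, hsvP, hsvQ,
      h1, hsvsv]
    rw [show (2:ℂ) • (P + Q - v - star v) = (P + Q - v - star v) + (P + Q - v - star v) by
      rw [two_smul]]
    abel
  have hEE : E * E = E := by
    rw [hE, smul_mul_assoc, mul_smul_comm, hXX, smul_smul, smul_smul]
    norm_num
  have mulU : ∀ a b : ℂ, (1 + a • E) * (1 + b • E) = 1 + (a + b + a * b) • E := by
    intro a b
    have key : (a • E) * (b • E) = (a * b) • E := by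
      rw [smul_mul_assoc, mul_smul_comm, smul_smul, hEE]
    rw [mul_add, add_mul, add_mul]
    simp only [one_mul, mul_one]
    rw [key, add_smul, add_smul]
    abel
  set c : unitInterval → ℂ := fun t => Complex.exp (Real.pi * (t : ℝ) * Complex.I) - 1 with hc
  set U : unitInterval → D := fun t => 1 + (c t) • E with hU
  have hcoef : ∀ t, (starRingEnd ℂ) (c t) + c t + (starRingEnd ℂ) (c t) * c t = 0 := by
    intro t
    have key : (starRingEnd ℂ) (Complex.exp (Real.pi * (t:ℝ) * Complex.I))
        * Complex.exp (Real.pi * (t:ℝ) * Complex.I) = 1 := by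
      have hz : (starRingEnd ℂ) ((Real.pi : ℂ) * (t:ℝ) * Complex.I)
          + (Real.pi : ℂ) * (t:ℝ) * Complex.I = 0 := by
        simp only [map_mul, Complex.conj_ofReal, Complex.conj_I]
        ring
      rw [← Complex.exp_conj, ← Complex.exp_add, hz, Complex.exp_zero]
    simp only [hc, map_sub, map_one]
    linear_combination key
  have hUster : ∀ t, star (U t) = 1 + (starRingEnd ℂ) (c t) • E := by
    intro t
    simp only [hU]
    simp only [star_add, star_one, star_smul, hEsa, RCLike.star_def]
  have hUU : ∀ t, star (U t) * U t = 1 := by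
    intro t
    rw [hUster]
    simp only [hU]
    rw [mulU, hcoef t, zero_smul, add_zero]
  refine ⟨⟨⟨fun t => U t * P * star (U t), ?_⟩, ?_, ?_⟩, ?_⟩
  · have hcont : Continuous c := by
      simp only [hc]; fun_prop
    simp only [hU]
    fun_prop
  · show U 0 * P * star (U 0) = P
    have hc0 : c 0 = 0 := by simp [hc]
    have hU0 : U 0 = 1 := by simp only [hU, hc0, zero_smul, add_zero]
    rw [hU0]; simp
  · show U 1 * P * star (U 1) = Q
    have hc1 : c 1 = -2 := by
      simp only [hc]
      norm_num [Complex.exp_pi_mul_I]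
    have hU1 : U 1 = 1 - P - Q + v + star v := by
      simp only [hU, hc1, hE, smul_smul]
      rw [show ((-2 : ℂ) * 2⁻¹) = -1 by norm_num]
      simp only [neg_smul, one_smul]
      abel
    have hU1sa : star (U 1) = U 1 := by
      rw [hU1]
      simp only [star_add, star_sub, star_one, hP.2, hQ.2, star_star]
      abel
    have hUP : U 1 * P = v := by
      rw [hU1]
      simp only [add_mul, sub_mul, one_mul, hP.1, hQP, hvP, hsvP]
      abel
    rw [hU1sa, hUP, hU1]
    simp only [mul_add, mul_sub, mul_one, hvP, hvQ, hvv, h2]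
    abel
  · intro t
    constructor
    · show (U t * P * star (U t)) * (U t * P * star (U t)) = U t * P * star (U t)
      have e : (U t * P * star (U t)) * (U t * P * star (U t))
          = U t * P * (star (U t) * U t) * P * star (U t) := by
        simp only [mul_assoc]
      rw [e, hUU, mul_one, mul_assoc (U t), hP.1]
    · show star (U t * P * star (U t)) = U t * P * star (U t)
      simp [star_mul, hP.2, mul_assoc]

/-- Gram–Schmidt straightening: the range projection of an isometry `w` is homotopic to
that of an isometry whose range is orthogonal to `e`, provided `‖w* e w‖ < 1`. -/
lemma gs_lemma [PartialOrder D] [StarOrderedRing D] [Nontrivial D] (w e : D) (hw : star w * w = 1) (he : IsProjectionElem e)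
    (hn : ‖star w * (e * w)‖ < 1) :
    ∃ W : D, star W * W = 1 ∧ e * W = 0 ∧ HtpyProj (w * star w) (W * star W) := by
  set d : D := star w * (e * w) with hd
  have hdsa : IsSelfAdjoint d := by
    rw [hd, IsSelfAdjoint, star_mul, star_mul, he.2, star_star, mul_assoc]
  have hd0 : (0 : D) ≤ d := by
    have : d = star (e * w) * (e * w) := by
      rw [star_mul, he.2, mul_assoc, ← mul_assoc e, he.1]
    rw [this]
    exact star_mul_self_nonneg _
  have hspec : ∀ x ∈ spectrum ℝ d, 0 ≤ x ∧ x < 1 := by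
    intro x hx
    refine ⟨spectrum_nonneg_of_nonneg hd0 hx, ?_⟩
    have h1 : ‖x‖ ≤ ‖d‖ := spectrum.norm_le_norm_of_mem hx
    have : x ≤ ‖d‖ := le_trans (le_abs_self x) h1
    exact lt_of_le_of_lt this hn
  have hpos : ∀ (t : unitInterval) (x : spectrum ℝ d),
      0 < 1 - (2 * (t:ℝ) - (t:ℝ)^2) * (x:ℝ) := by
    intro t x
    obtain ⟨hx0, hx1⟩ := hspec (x:ℝ) x.2
    have ht0 : (0:ℝ) ≤ t := t.2.1
    have ht1 : (t:ℝ) ≤ 1 := t.2.2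
    have hg1 : 2 * (t:ℝ) - (t:ℝ)^2 ≤ 1 := by nlinarith [sq_nonneg (1 - (t:ℝ))]
    have hg0 : 0 ≤ 2 * (t:ℝ) - (t:ℝ)^2 := by nlinarith
    nlinarith [mul_le_mul_of_nonneg_right hg1 hx0]
  set F : C(unitInterval × spectrum ℝ d, ℝ) :=
    ⟨fun z => (Real.sqrt (1 - (2 * (z.1:ℝ) - (z.1:ℝ)^2) * (z.2:ℝ)))⁻¹, by
      apply Continuous.inv₀
      · fun_prop
      · intro z
        exact Real.sqrt_ne_zero'.mpr (hpos z.1 z.2)⟩ with hF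
  set ι : C(spectrum ℝ d, ℝ) := (ContinuousMap.id ℝ).restrict (spectrum ℝ d) with hι
  set Z : unitInterval → D := fun t => cfcHom hdsa (F.curry t) with hZ
  have hFapp : ∀ (t : unitInterval) (x : spectrum ℝ d),
      F.curry t x = (Real.sqrt (1 - (2 * (t:ℝ) - (t:ℝ)^2) * (x:ℝ)))⁻¹ := by
    intro t x
    rw [ContinuousMap.curry_apply]
    rfl
  have hstarF : ∀ t : unitInterval, star (F.curry t) = F.curry t := by
    intro t
    ext x
    simp
  have hZsa : ∀ t, star (Z t) = Z t := by
    intro t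
    simp only [hZ]
    rw [← map_star, hstarF]
  have hG : ∀ t : unitInterval,
      cfcHom hdsa ((1 : C(spectrum ℝ d, ℝ)) - (2 * (t:ℝ) - (t:ℝ)^2) • ι)
        = 1 - (2 * (t:ℝ) - (t:ℝ)^2) • d := by
    intro t
    rw [map_sub, map_one, map_smul, hι, cfcHom_id]
  have hFFG : ∀ t : unitInterval,
      F.curry t * F.curry t * ((1 : C(spectrum ℝ d, ℝ)) - (2 * (t:ℝ) - (t:ℝ)^2) • ι) = 1 := by
    intro t
    ext x
    have hx := hpos t x
    simp only [ContinuousMap.mul_apply, ContinuousMap.sub_apply, ContinuousMap.one_apply,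
      ContinuousMap.smul_apply, hFapp, hι, ContinuousMap.coe_restrict,
      ContinuousMap.coe_id, Function.comp_apply, smul_eq_mul, Set.restrict_apply, id_eq]
    rw [← mul_inv, Real.mul_self_sqrt hx.le]
    exact inv_mul_cancel₀ hx.ne'
  set Y : unitInterval → D := fun t => (1 - (t:ℝ) • e) * w with hY
  have hYY : ∀ t, star (Y t) * Y t = 1 - (2 * (t:ℝ) - (t:ℝ)^2) • d := by
    intro t
    have hYsa : star (1 - (t:ℝ) • e) = 1 - (t:ℝ) • e := by
      rw [star_sub, star_one, star_smul, he.2, star_trivial]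
    have hsq : (1 - (t:ℝ) • e) * (1 - (t:ℝ) • e) = 1 - (2 * (t:ℝ) - (t:ℝ)^2) • e := by
      have key : ((t:ℝ) • e) * ((t:ℝ) • e) = ((t:ℝ)^2) • e := by
        rw [smul_mul_assoc, mul_smul_comm, smul_smul, he.1, sq]
      simp only [mul_sub, sub_mul, mul_one, one_mul, key]
      module
    calc star (Y t) * Y t = (star w * (1 - (t:ℝ) • e)) * ((1 - (t:ℝ) • e) * w) := by
          simp only [hY, star_mul, hYsa]
      _ = star w * (((1 - (t:ℝ) • e) * (1 - (t:ℝ) • e)) * w) := by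
          simp only [mul_assoc]
      _ = star w * w - (2 * (t:ℝ) - (t:ℝ)^2) • (star w * (e * w)) := by
          rw [hsq, sub_mul, one_mul, smul_mul_assoc, mul_sub, mul_smul_comm]
      _ = 1 - (2 * (t:ℝ) - (t:ℝ)^2) • d := by rw [hw, hd]
  set U : unitInterval → D := fun t => Y t * Z t with hU
  have hUU : ∀ t, star (U t) * U t = 1 := by
    intro t
    have e1 : star (U t) * U t = Z t * (star (Y t) * (Y t * Z t)) := by
      simp only [hU, star_mul, hZsa t, mul_assoc]
    rw [e1, ← mul_assoc (star (Y t)), hYY, ← hG t]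
    simp only [hZ]
    rw [← mul_assoc, ← map_mul, ← map_mul, mul_right_comm, hFFG t, map_one]
  have hproj : ∀ t, IsProjectionElem (U t * star (U t)) := by
    intro t
    constructor
    · have e : (U t * star (U t)) * (U t * star (U t))
          = U t * ((star (U t) * U t) * star (U t)) := by simp only [mul_assoc]
      rw [e, hUU, one_mul]
    · simp [star_mul, mul_assoc]
  have hU0 : U 0 = w := by
    have hY0 : Y 0 = w := by simp [hY]
    have hZ0 : Z 0 = 1 := by
      have hcurry0 : F.curry 0 = 1 := by
        ext x
        rw [hFapp]
        norm_num
      simp only [hZ, hcurry0, map_one]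
    simp only [hU, hY0, hZ0, mul_one]
  have hcont : Continuous fun t => U t * star (U t) := by
    have hZcont : Continuous Z := by
      simp only [hZ]
      exact (cfcHom_isClosedEmbedding (R := ℝ) hdsa).continuous.comp (map_continuous F.curry)
    have hYcont : Continuous Y := by simp only [hY]; fun_prop
    have hUcont : Continuous U := by simp only [hU]; exact hYcont.mul hZcont
    exact hUcont.mul hUcont.star
  refine ⟨U 1, hUU 1, ?_, ?_⟩
  · have h1e : e * ((1 : D) - ((1 : unitInterval) : ℝ) • e) = 0 := by
      simp [mul_sub, he.1]
    simp only [hU, hY]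
    rw [← mul_assoc, ← mul_assoc, h1e, zero_mul, zero_mul]
  · refine ⟨⟨⟨fun t => U t * star (U t), hcont⟩, ?_, rfl⟩, hproj⟩
    show U 0 * star (U 0) = w * star w
    rw [hU0]

lemma pow_isometry (a : D) (ha : star a * a = 1) : ∀ k : ℕ, star (a ^ k) * a ^ k = 1 := by
  intro k
  induction k with
  | zero => simp
  | succ k ih =>
    rw [pow_succ, star_mul, mul_assoc, ← mul_assoc (star (a ^ k)), ih, one_mul, ha]
  
lemma pow_shift (a : D) (ha : star a * a = 1) (i k : ℕ) :
    star (a ^ i) * a ^ (i + k) = a ^ k := by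
  rw [pow_add, ← mul_assoc, pow_isometry a ha, one_mul]

lemma ortho12 {u₁ u₂ : D} (hu₁ : star u₁ * u₁ = 1) (hu₂ : star u₂ * u₂ = 1)
    (hO₂ : u₁ * star u₁ + u₂ * star u₂ = 1) : star u₁ * u₂ = 0 := by
  have h : star u₁ * u₂ + star u₁ * u₂ = star u₁ * u₂ := by
    calc star u₁ * u₂ + star u₁ * u₂
        = (star u₁ * u₁) * (star u₁ * u₂) + (star u₁ * u₂) * (star u₂ * u₂) := by
          rw [hu₁, hu₂, one_mul, mul_one]
      _ = star u₁ * ((u₁ * star u₁ + u₂ * star u₂) * u₂) := by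
          simp only [add_mul, mul_add, mul_assoc]
      _ = star u₁ * u₂ := by rw [hO₂, one_mul]
  have h2 : star u₁ * u₂ + star u₁ * u₂ = star u₁ * u₂ + 0 := by rw [add_zero]; exact h
  exact add_left_cancel h2

lemma comp_star {N : ℕ} (v : Fin N → D) (A : Matrix (Fin N) (Fin N) D) :
    star (∑ i, ∑ j, v i * A i j * star (v j))
      = ∑ i, ∑ j, v i * (star A) i j * star (v j) := by
  simp only [star_sum, star_mul, star_star, Matrix.star_apply]
  rw [Finset.sum_comm]
  apply Finset.sum_congr rfl
  intro i _
  apply Finset.sum_congr rfl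
  intro j _
  simp only [mul_assoc]

lemma comp_mul {N : ℕ} (v : Fin N → D)
    (hv : ∀ i j, star (v i) * v j = if i = j then (1:D) else 0)
    (A B : Matrix (Fin N) (Fin N) D) :
    (∑ i, ∑ j, v i * A i j * star (v j)) * (∑ i, ∑ j, v i * B i j * star (v j))
      = ∑ i, ∑ j, v i * (A * B) i j * star (v j) := by
  have inner : ∀ i j k l : Fin N, (v i * A i j * star (v j)) * (v k * B k l * star (v l))
      = if j = k then v i * (A i j * B k l) * star (v l) else 0 := by
    intro i j k l
    have e : (v i * A i j * star (v j)) * (v k * B k l * star (v l))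
        = v i * (A i j * ((star (v j) * v k) * (B k l * star (v l)))) := by
      simp only [mul_assoc]
    rw [e, hv j k]
    split_ifs with h
    · simp only [one_mul, mul_assoc]
    · simp
  calc (∑ i, ∑ j, v i * A i j * star (v j)) * (∑ i, ∑ j, v i * B i j * star (v j))
      = ∑ i, ∑ j, ∑ k, ∑ l, (v i * A i j * star (v j)) * (v k * B k l * star (v l)) := by
        rw [Finset.sum_mul]
        apply Finset.sum_congr rfl; intro i _
        rw [Finset.sum_mul]
        apply Finset.sum_congr rfl; intro j _
        rw [Finset.mul_sum]
        apply Finset.sum_congr rfl; intro k _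
        rw [Finset.mul_sum]
    _ = ∑ i, ∑ j, ∑ k, ∑ l, if j = k then v i * (A i j * B k l) * star (v l) else 0 := by
        simp only [inner]
    _ = ∑ i, ∑ j, ∑ l, v i * (A i j * B j l) * star (v l) := by
        apply Finset.sum_congr rfl; intro i _
        apply Finset.sum_congr rfl; intro j _
        rw [Finset.sum_comm]
        apply Finset.sum_congr rfl; intro l _
        rw [Finset.sum_ite_eq]
        simp
    _ = ∑ i, ∑ l, ∑ j, v i * (A i j * B j l) * star (v l) := by
        apply Finset.sum_congr rfl; intro i _
        rw [Finset.sum_comm]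
    _ = ∑ i, ∑ j, v i * (A * B) i j * star (v j) := by
        apply Finset.sum_congr rfl; intro i _
        apply Finset.sum_congr rfl; intro l _
        rw [Matrix.mul_apply, Finset.mul_sum, Finset.sum_mul]

lemma comp_diag {N : ℕ} (v : Fin N → D) (f : Fin N → D) :
    (∑ i, ∑ j, v i * (Matrix.diagonal f) i j * star (v j)) = ∑ i, v i * f i * star (v i) := by
  apply Finset.sum_congr rfl
  intro i _
  rw [Finset.sum_eq_single i]
  · rw [Matrix.diagonal_apply_eq]
  · intro j _ hj
    rw [Matrix.diagonal_apply_ne _ (Ne.symm hj)]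
    simp
  · intro h
    exact absurd (Finset.mem_univ i) h

lemma key_diag_sum {N : ℕ} [NeZero N] (v : Fin N → D)
    (hcomplete : ∑ i, v i * star (v i) = 1) (g : D) :
    (∑ i, v i * (if i = (0 : Fin N) then g else 1) * star (v i))
      = v 0 * g * star (v 0) + (1 - v 0 * star (v 0)) := by
  have step : ∀ i : Fin N, v i * (if i = (0 : Fin N) then g else 1) * star (v i)
      = (if i = (0 : Fin N) then v 0 * g * star (v 0) - v 0 * star (v 0) else 0)
        + v i * star (v i) := by
    intro i
    split_ifs with h
    · subst h
      rw [sub_add_cancel]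
    · rw [mul_one, zero_add]
  rw [Finset.sum_congr rfl (fun i _ => step i), Finset.sum_add_distrib, hcomplete,
    Finset.sum_ite_eq' Finset.univ (0 : Fin N)]
  simp only [Finset.mem_univ, if_true]
  abel

/-- The heart of the Cuntz–Higson argument: a projection dominating the range of an
isometry, with vanishing `K₀` class, is itself the range of an isometry. -/
lemma exists_isometry_onto (u₁ u₂ s₁ p : D)
    (hu₁ : star u₁ * u₁ = 1) (hu₂ : star u₂ * u₂ = 1)
    (hO₂ : u₁ * star u₁ + u₂ * star u₂ = 1)
    (hs₁ : star s₁ * s₁ = 1) (hp : IsProjectionElem p) (hps₁ : p * s₁ = s₁)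
    (hK0 : K0ElemClassZero p) :
    ∃ a : D, star a * a = 1 ∧ a * star a = p := by
  classical
  have h12 : star u₁ * u₂ = 0 := ortho12 hu₁ hu₂ hO₂
  obtain ⟨n, c, hc1, hc2⟩ := hK0
  rcases Nat.eq_zero_or_pos n with hn | hn
  · -- degenerate case: `p = 0` forces `1 = 0`
    subst hn
    have e2 := congrFun (congrFun hc2 0) 0
    rw [Matrix.mul_apply] at e2
    rw [show (Finset.univ : Finset (Fin 1)) = {0} from rfl, Finset.sum_singleton] at e2
    rw [Matrix.star_apply, Matrix.diagonal_apply_eq] at e2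
    simp only [if_pos] at e2
    have hc00 : c 0 0 = 0 := by
      have := star_mul_self_zero (x := star (c 0 0)) (by rwa [star_star])
      rwa [star_eq_zero] at this
    have e1 := congrFun (congrFun hc1 0) 0
    rw [Matrix.mul_apply] at e1
    rw [show (Finset.univ : Finset (Fin 1)) = {0} from rfl, Finset.sum_singleton] at e1
    rw [Matrix.star_apply, Matrix.diagonal_apply_eq] at e1
    simp only [if_pos] at e1
    have hp0 : p = 0 := by rw [← e1, hc00]; simp
    have h10 : (1 : D) = 0 := by
      rw [← hs₁, ← hps₁, hp0, zero_mul, mul_zero]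
    refine ⟨0, ?_, ?_⟩
    · rw [star_zero, mul_zero]; exact h10.symm
    · rw [star_zero, mul_zero]; exact hp0.symm
  · obtain ⟨m, rfl⟩ : ∃ m, n = m + 1 := ⟨n - 1, (Nat.succ_pred_eq_of_pos hn).symm⟩
    set v : Fin (m + 1 + 1) → D :=
      fun i => u₂ ^ (i : ℕ) * (if (i : ℕ) = m + 1 then 1 else u₁) with hv
    have hv0 : v 0 = u₁ := by
      simp only [hv]
      norm_num
    -- orthonormality
    have keylt : ∀ i j : Fin (m + 1 + 1), (i : ℕ) < (j : ℕ) → star (v i) * v j = 0 := by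
      intro i j hij
      have hi : ¬((i : ℕ) = m + 1) := by
        have := j.2
        omega
      obtain ⟨k, hk⟩ : ∃ k, (j : ℕ) = (i : ℕ) + (k + 1) := ⟨(j : ℕ) - (i : ℕ) - 1, by omega⟩
      simp only [hv, if_neg hi, hk]
      rw [star_mul, mul_assoc, ← mul_assoc (star (u₂ ^ (i : ℕ))), pow_shift u₂ hu₂,
        pow_succ', mul_assoc, ← mul_assoc (star u₁), h12, zero_mul]
    have horth : ∀ i j : Fin (m + 1 + 1), star (v i) * v j = if i = j then (1 : D) else 0 := by
      intro i j
      rcases lt_trichotomy (i : ℕ) (j : ℕ) with hlt | heq | hgt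
      · rw [if_neg (by exact fun h => by subst h; omega)]
        exact keylt i j hlt
      · have : i = j := Fin.ext heq
        subst this
        rw [if_pos rfl]
        by_cases h : (i : ℕ) = m + 1
        · simp only [hv, if_pos h, mul_one]
          exact pow_isometry u₂ hu₂ (i : ℕ)
        · simp only [hv, if_neg h]
          rw [star_mul, mul_assoc, ← mul_assoc (star (u₂ ^ (i : ℕ))),
            pow_isometry u₂ hu₂, one_mul, hu₁]
      · rw [if_neg (by exact fun h => by subst h; omega)]
        have h0' := congrArg star (keylt j i hgt)
        rw [star_mul, star_star, star_zero] at h0'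
        exact h0'
    -- completeness
    have tele : ∀ k : ℕ,
        (∑ i ∈ Finset.range k, u₂ ^ i * (u₁ * star u₁) * star (u₂ ^ i))
          + u₂ ^ k * star (u₂ ^ k) = 1 := by
      intro k
      induction k with
      | zero => simp
      | succ k ih =>
        rw [Finset.sum_range_succ]
        have hsplit : u₂ ^ (k + 1) * star (u₂ ^ (k + 1))
            = u₂ ^ k * (u₂ * star u₂) * star (u₂ ^ k) := by
          rw [pow_succ, star_mul]
          simp only [mul_assoc]
        have merge : u₂ ^ k * (u₁ * star u₁) * star (u₂ ^ k)
            + u₂ ^ k * (u₂ * star u₂) * star (u₂ ^ k) = u₂ ^ k * star (u₂ ^ k) := by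
          rw [← add_mul, ← mul_add, hO₂, mul_one]
        rw [hsplit, add_assoc, merge]
        exact ih
    have hcomplete : ∑ i, v i * star (v i) = 1 := by
      rw [Fin.sum_univ_castSucc]
      have hlast : v (Fin.last (m + 1)) * star (v (Fin.last (m + 1)))
          = u₂ ^ (m + 1) * star (u₂ ^ (m + 1)) := by
        norm_num [hv, Fin.val_last]
      have hcast : ∀ i : Fin (m + 1), v i.castSucc * star (v i.castSucc)
          = u₂ ^ (i : ℕ) * (u₁ * star u₁) * star (u₂ ^ (i : ℕ)) := by
        intro i
        have hne : ¬((i : ℕ) = m + 1) := by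
          have := i.2
          omega
        simp only [hv, Fin.coe_castSucc, if_neg hne, star_mul]
        simp only [mul_assoc]
      rw [hlast, Finset.sum_congr rfl (fun i _ => hcast i)]
      rw [Fin.sum_univ_eq_sum_range (fun i => u₂ ^ i * (u₁ * star u₁) * star (u₂ ^ i))]
      exact tele (m + 1)
    -- the compressed partial isometry
    set C : D := ∑ i, ∑ j, v i * c i j * star (v j) with hC
    have hCsC : star C * C = u₁ * p * star u₁ + (1 - u₁ * star u₁) := by
      rw [hC, comp_star v c, comp_mul v horth, hc1, comp_diag, key_diag_sum v hcomplete p,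
        hv0]
    have hCCs : C * star C = 1 - u₁ * star u₁ := by
      have e : C * star C = (∑ i, ∑ j, v i * c i j * star (v j))
          * (∑ i, ∑ j, v i * (star c) i j * star (v j)) := by
        rw [hC, comp_star v c]
      rw [e, comp_mul v horth, hc2, comp_diag, key_diag_sum v hcomplete 0, hv0]
      simp
    -- the Murray–von Neumann chain 1 ~ u₂u₂* ~ M ~ p
    have h2u : (1 : D) - u₁ * star u₁ = u₂ * star u₂ := by
      rw [← hO₂]; abel
    have hpu : IsProjectionElem (u₁ * p * star u₁) := by
      constructor
      · have e : (u₁ * p * star u₁) * (u₁ * p * star u₁)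
            = u₁ * (p * ((star u₁ * u₁) * (p * star u₁))) := by simp only [mul_assoc]
        rw [e, hu₁, one_mul, rearr hp.1, ← mul_assoc]
      · simp [star_mul, hp.2, mul_assoc]
    have mvn1 : MvNEquiv (1 : D) (u₂ * star u₂) := ⟨u₂, hu₂, rfl⟩
    have mvn2 : MvNEquiv (u₂ * star u₂) (u₁ * p * star u₁ + (1 - u₁ * star u₁)) := by
      refine ⟨star C, ?_, ?_⟩
      · rw [star_star, hCCs, h2u]
      · rw [star_star, hCsC]
    have hs₁p' : star s₁ * p = star s₁ := by
      have := congrArg star hps₁; rwa [star_mul, hp.2] at this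
    set A : D := p - s₁ * star s₁ with hA
    have hAsa : star A = A := by rw [hA, star_sub, hp.2, star_mul, star_star]
    have hAs : A * s₁ = 0 := by
      rw [hA, sub_mul, hps₁, mul_assoc, hs₁, mul_one, sub_self]
    have hsA : star s₁ * A = 0 := by
      have := congrArg star hAs; rwa [star_mul, hAsa, star_zero] at this
    have hA2 : A * A = A := by
      have e : A * A = A * p - A * s₁ * star s₁ := by
        nth_rewrite 2 [hA]
        rw [mul_sub, ← mul_assoc]
      rw [e, hAs, zero_mul, sub_zero, hA, sub_mul, hp.1, mul_assoc, hs₁p']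
    have hAB : ∀ x : D, A * (s₁ * x) = 0 := by
      intro x
      rw [← mul_assoc, hAs, zero_mul]
    have hBA : ∀ x : D, (x * star s₁) * A = 0 := by
      intro x
      rw [mul_assoc, hsA, mul_zero]
    have piece1a : MvNEquiv (u₁ * p * star u₁) p := by
      refine ⟨p * star u₁, ?_, ?_⟩
      · simp only [star_mul, star_star, hp.2, mul_assoc, rearr hp.1]
      · simp only [star_mul, star_star, hp.2, mul_assoc, rearr hu₁, one_mul, rearr hp.1,
          hp.1]
    have piece1b : MvNEquiv p (A + s₁ * (u₁ * star u₁) * star s₁) := by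
      refine ⟨A + s₁ * u₁ * star s₁, ?_, ?_⟩
      · have hsw : star (A + s₁ * u₁ * star s₁) = A + s₁ * star u₁ * star s₁ := by
          rw [star_add, hAsa, star_mul, star_mul, star_star]
          simp only [mul_assoc]
        rw [hsw, add_mul, mul_add, mul_add, hA2]
        rw [show A * (s₁ * u₁ * star s₁) = A * (s₁ * (u₁ * star s₁)) by
          simp only [mul_assoc], hAB]
        rw [show (s₁ * star u₁ * star s₁) * A = (s₁ * star u₁ * star s₁) * A from rfl]
        rw [show s₁ * star u₁ * star s₁ = (s₁ * star u₁) * star s₁ from rfl, hBA]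
        have e4 : (s₁ * star u₁) * star s₁ * (s₁ * u₁ * star s₁) = s₁ * star s₁ := by
          simp only [mul_assoc, rearr hs₁, one_mul, rearr hu₁]
        rw [e4, add_zero, zero_add, hA]
        abel
      · have hsw : star (A + s₁ * u₁ * star s₁) = A + s₁ * star u₁ * star s₁ := by
          rw [star_add, hAsa, star_mul, star_mul, star_star]
          simp only [mul_assoc]
        rw [hsw, add_mul, mul_add, mul_add, hA2]
        rw [show A * (s₁ * star u₁ * star s₁) = A * (s₁ * (star u₁ * star s₁)) by
          simp only [mul_assoc], hAB]
        rw [show s₁ * u₁ * star s₁ = (s₁ * u₁) * star s₁ from rfl, hBA]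
        have e4 : (s₁ * u₁) * star s₁ * (s₁ * star u₁ * star s₁)
            = s₁ * (u₁ * star u₁) * star s₁ := by
          simp only [mul_assoc, rearr hs₁, one_mul]
        rw [e4, add_zero, zero_add]
    have piece1 : MvNEquiv (u₁ * p * star u₁) (A + s₁ * (u₁ * star u₁) * star s₁) :=
      mvn_trans hpu piece1a piece1b
    have piece2 : MvNEquiv (u₂ * star u₂) (s₁ * (u₂ * star u₂) * star s₁) := by
      refine ⟨s₁ * (u₂ * star u₂), ?_, ?_⟩
      · simp only [star_mul, star_star, mul_assoc, rearr hs₁, one_mul, rearr hu₂]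
      · simp only [star_mul, star_star, mul_assoc, rearr hu₂, one_mul]
    have orth1 : (u₁ * p * star u₁) * (u₂ * star u₂) = 0 := by
      rw [mul_assoc (u₁ * p), ← mul_assoc (star u₁), h12, zero_mul, mul_zero]
    have orth2 : (A + s₁ * (u₁ * star u₁) * star s₁) * (s₁ * (u₂ * star u₂) * star s₁)
        = 0 := by
      rw [add_mul]
      rw [show A * (s₁ * (u₂ * star u₂) * star s₁)
          = A * (s₁ * ((u₂ * star u₂) * star s₁)) by simp only [mul_assoc], hAB]
      have e2 : (s₁ * (u₁ * star u₁) * star s₁) * (s₁ * (u₂ * star u₂) * star s₁) = 0 := by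
        simp only [mul_assoc, rearr hs₁, one_mul, rearr h12, zero_mul, mul_zero]
      rw [e2, add_zero]
    have hsum : MvNEquiv (u₁ * p * star u₁ + u₂ * star u₂)
        ((A + s₁ * (u₁ * star u₁) * star s₁) + s₁ * (u₂ * star u₂) * star s₁) :=
      mvn_sum hpu (range_proj u₂ hu₂) orth1 orth2 piece1 piece2
    have heq : (A + s₁ * (u₁ * star u₁) * star s₁) + s₁ * (u₂ * star u₂) * star s₁ = p := by
      rw [add_assoc, ← add_mul, ← mul_add, hO₂, mul_one, hA]
      abel
    have mvn3 : MvNEquiv (u₁ * p * star u₁ + (1 - u₁ * star u₁)) p := by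
      rw [h2u]
      exact heq ▸ hsum
    have proj1 : IsProjectionElem (1 : D) := ⟨one_mul 1, star_one D⟩
    exact mvn_trans proj1 (mvn_trans proj1 mvn1 mvn2) mvn3

lemma proj_compl (p : D) (hp : IsProjectionElem p) : IsProjectionElem (1 - p) := by
  constructor
  · have e : (1 - p) * (1 - p) = 1 - p - p + p * p := by noncomm_ring
    rw [e, hp.1]
    abel
  · rw [star_sub, star_one, hp.2]

lemma mvn_conj_isometries (x y : D) (hx : star x * x = 1) (hy : star y * y = 1) :
    MvNEquiv (x * star x) (y * star y) := by
  refine ⟨y * star x, ?_, ?_⟩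
  · simp only [star_mul, star_star, mul_assoc, rearr hy, one_mul]
  · simp only [star_mul, star_star, mul_assoc, rearr hx, one_mul]

section Order

variable [PartialOrder D] [StarOrderedRing D]

lemma proj_le_mul (e f : D) (he : IsProjectionElem e) (hf : IsProjectionElem f)
    (h : e ≤ f) : e * f = e ∧ f * e = e := by
  have h1 : (1 - f) * e * (1 - f) ≤ (1 - f) * f * (1 - f) := by
    have := star_left_conjugate_le_conjugate h (1 - f)
    rwa [star_sub, star_one, hf.2] at this
  have h2 : (1 - f) * f * (1 - f) = 0 := by
    rw [sub_mul, one_mul, hf.1, sub_self, zero_mul]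
  have key : star (e * (1 - f)) * (e * (1 - f)) = (1 - f) * e * (1 - f) := by
    simp only [star_mul, star_sub, star_one, hf.2, he.2, mul_assoc, rearr he.1]
  have h3 : (0 : D) ≤ (1 - f) * e * (1 - f) := by
    rw [← key]
    exact star_mul_self_nonneg _
  have h4 : (1 - f) * e * (1 - f) = 0 := le_antisymm (h1.trans_eq h2) h3
  have h5 : e * (1 - f) = 0 := star_mul_self_zero (by rw [key, h4])
  rw [mul_sub, mul_one] at h5
  have hef : e * f = e := (sub_eq_zero.mp h5).symm
  exact ⟨hef, by have := congrArg star hef; rwa [star_mul, he.2, hf.2] at this⟩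

lemma isometry_range_le (f v : D) (hf : IsProjectionElem f) (hv : star v * v = 1)
    (h : v * star v ≤ f) : f * v = v := by
  have h2 := (proj_le_mul _ _ (range_proj v hv) hf h).2
  calc f * v = f * (v * star v) * v := by rw [mul_assoc, mul_assoc, hv, mul_one]
    _ = v * star v * v := by rw [h2]
    _ = v := by rw [mul_assoc, hv, mul_one]

lemma isometry_range_orth (f v : D) (hf : IsProjectionElem f) (hv : star v * v = 1)
    (h : v * star v ≤ 1 - f) : f * v = 0 := by
  have h1 := isometry_range_le (1 - f) v (proj_compl f hf) hv h
  rw [sub_mul, one_mul] at h1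
  exact sub_eq_self.mp h1

end Order

end CHaux

/-- Cuntz–Higson type lemma: in a properly infinite unital C*-algebra in
Cuntz standard form, two splitting projections `p`, `q` with vanishing `K₀`-classes which
dominate ranges of isometries `r₁`, `r₂` with `‖r₁* r₂‖ < 1` are homotopic. -/
theorem splitting_projections_homotopic
    (D : Type) [CStarAlgebra D] [PartialOrder D] [StarOrderedRing D]
    -- properly infinite: two isometries with orthogonal ranges
    (s t : D) (hs : star s * s = 1) (ht : star t * t = 1) (hst : star s * t = 0)
    -- Cuntz standard form: a unital copy of O₂
    (u₁ u₂ : D) (hu₁ : star u₁ * u₁ = 1) (hu₂ : star u₂ * u₂ = 1)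
    (hO₂ : u₁ * star u₁ + u₂ * star u₂ = 1)
    -- p and q are splitting projections
    (p q : D) (hp : IsProjectionElem p) (hq : IsProjectionElem q)
    (s₁ s₂ : D) (hs₁ : star s₁ * s₁ = 1) (hs₂ : star s₂ * s₂ = 1)
    (hs₁p : s₁ * star s₁ ≤ p) (hs₂p : s₂ * star s₂ ≤ 1 - p)
    (t₁ t₂ : D) (ht₁ : star t₁ * t₁ = 1) (ht₂ : star t₂ * t₂ = 1)
    (ht₁q : t₁ * star t₁ ≤ q) (ht₂q : t₂ * star t₂ ≤ 1 - q)
    -- vanishing K₀-classes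
    (hK0p : K0ElemClassZero p) (hK0q : K0ElemClassZero q)
    -- the almost-orthogonality datum
    (r₁ r₂ : D) (hr₁ : star r₁ * r₁ = 1) (hr₂ : star r₂ * r₂ = 1)
    (hr₁p : r₁ * star r₁ ≤ p) (hr₂q : r₂ * star r₂ ≤ q)
    (hr : ‖star r₁ * r₂‖ < 1) :
    ProjHomotopic p q := by
  classical
  rcases subsingleton_or_nontrivial D with hD | hD
  · exact ⟨ContinuousMap.const _ p, fun _ => hp, Subsingleton.elim _ _, Subsingleton.elim _ _⟩
  have h12 : star u₁ * u₂ = 0 := CHaux.ortho12 hu₁ hu₂ hO₂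
  -- order hypotheses → algebraic identities
  have hps₁ : p * s₁ = s₁ := CHaux.isometry_range_le p s₁ hp hs₁ hs₁p
  have hps₂ : p * s₂ = 0 := CHaux.isometry_range_orth p s₂ hp hs₂ hs₂p
  have hqt₁ : q * t₁ = t₁ := CHaux.isometry_range_le q t₁ hq ht₁ ht₁q
  have hqt₂ : q * t₂ = 0 := CHaux.isometry_range_orth q t₂ hq ht₂ ht₂q
  have hpr₁ : p * r₁ = r₁ := CHaux.isometry_range_le p r₁ hp hr₁ hr₁p
  have hqr₂ : q * r₂ = r₂ := CHaux.isometry_range_le q r₂ hq hr₂ hr₂q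
  -- the isometries onto p and q
  obtain ⟨a, ha1, ha2⟩ := CHaux.exists_isometry_onto u₁ u₂ s₁ p hu₁ hu₂ hO₂ hs₁ hp hps₁ hK0p
  obtain ⟨b, hb1, hb2⟩ := CHaux.exists_isometry_onto u₁ u₂ t₁ q hu₁ hu₂ hO₂ ht₁ hq hqt₁ hK0q
  -- isometries r₁ u₁ and r₂ u₁
  have hru₁ : star (r₁ * u₁) * (r₁ * u₁) = 1 := by
    simp only [star_mul, mul_assoc, CHaux.rearr hr₁, one_mul, hu₁]
  have hru₂ : star (r₂ * u₁) * (r₂ * u₁) = 1 := by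
    simp only [star_mul, mul_assoc, CHaux.rearr hr₂, one_mul, hu₁]
  -- the Gram–Schmidt isometry from the almost-orthogonality datum
  have hu₁norm : ‖u₁‖ = 1 := by
    have h := CStarRing.norm_star_mul_self (x := u₁)
    rw [hu₁, norm_one] at h
    rcases mul_self_eq_one_iff.mp h.symm with h' | h'
    · exact h'
    · have := norm_nonneg u₁
      linarith
  have hnorm : ‖star (r₂ * u₁) * ((r₁ * star r₁) * (r₂ * u₁))‖ < 1 := by
    have ex : star (r₂ * u₁) * ((r₁ * star r₁) * (r₂ * u₁))
        = star (star r₁ * (r₂ * u₁)) * (star r₁ * (r₂ * u₁)) := by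
      simp only [star_mul, star_star, mul_assoc]
    rw [ex, CStarRing.norm_star_mul_self]
    have h1 : ‖star r₁ * (r₂ * u₁)‖ ≤ ‖star r₁ * r₂‖ := by
      rw [← mul_assoc]
      calc ‖star r₁ * r₂ * u₁‖ ≤ ‖star r₁ * r₂‖ * ‖u₁‖ := norm_mul_le _ _
        _ = ‖star r₁ * r₂‖ := by rw [hu₁norm, mul_one]
    nlinarith [norm_nonneg (star r₁ * (r₂ * u₁)), norm_nonneg (star r₁ * r₂)]
  obtain ⟨W, hW1, hW2, hW3⟩ :=
    CHaux.gs_lemma (r₂ * u₁) (r₁ * star r₁) hru₂ (CHaux.range_proj r₁ hr₁) hnorm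
  -- star r₁ * W = 0
  have hrW : star r₁ * W = 0 := by
    rw [mul_assoc] at hW2
    calc star r₁ * W = (star r₁ * r₁) * (star r₁ * W) := by rw [hr₁, one_mul]
      _ = star r₁ * (r₁ * (star r₁ * W)) := by rw [mul_assoc]
      _ = 0 := by rw [hW2, mul_zero]
  -- auxiliary orthogonality identities
  have hs₂p0 : star s₂ * p = 0 := by
    have := congrArg star hps₂
    rwa [star_mul, hp.2, star_zero] at this
  have hs₂r₁ : star s₂ * r₁ = 0 := by
    rw [← hpr₁, ← mul_assoc, hs₂p0, zero_mul]
  have ht₂q0 : star t₂ * q = 0 := by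
    have := congrArg star hqt₂
    rwa [star_mul, hq.2, star_zero] at this
  have hr₂t₂ : star r₂ * t₂ = 0 := by
    have ht₂r₂ : star t₂ * r₂ = 0 := by
      rw [← hqr₂, ← mul_assoc, ht₂q0, zero_mul]
    have := congrArg star ht₂r₂
    rwa [star_mul, star_star, star_zero] at this
  have hr₂q0 : star r₂ * q = star r₂ := by
    have := congrArg star hqr₂
    rwa [star_mul, hq.2] at this
  -- the chain of homotopies
  have step1 : CHaux.HtpyProj p (s₂ * star s₂) := by
    apply CHaux.htpy_of_orth_mvn hp
    · rw [← mul_assoc, hps₂, zero_mul]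
    · have h := CHaux.mvn_conj_isometries a s₂ ha1 hs₂
      rwa [ha2] at h
  have step2 : CHaux.HtpyProj (s₂ * star s₂) ((r₁ * u₁) * star (r₁ * u₁)) := by
    apply CHaux.htpy_of_orth_mvn (CHaux.range_proj s₂ hs₂)
    · simp only [star_mul, star_star, mul_assoc, CHaux.rearr hs₂r₁, zero_mul, mul_zero]
    · exact CHaux.mvn_conj_isometries s₂ (r₁ * u₁) hs₂ hru₁
  have step3 : CHaux.HtpyProj ((r₁ * u₁) * star (r₁ * u₁)) (W * star W) := by
    apply CHaux.htpy_of_orth_mvn (CHaux.range_proj (r₁ * u₁) hru₁)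
    · simp only [star_mul, star_star, mul_assoc, CHaux.rearr hrW, zero_mul, mul_zero]
    · exact CHaux.mvn_conj_isometries (r₁ * u₁) W hru₁ hW1
  have step4 : CHaux.HtpyProj (W * star W) ((r₂ * u₁) * star (r₂ * u₁)) := hW3.symm
  have step5 : CHaux.HtpyProj ((r₂ * u₁) * star (r₂ * u₁)) (t₂ * star t₂) := by
    apply CHaux.htpy_of_orth_mvn (CHaux.range_proj (r₂ * u₁) hru₂)
    · simp only [star_mul, star_star, mul_assoc, CHaux.rearr hr₂t₂, zero_mul, mul_zero]
    · exact CHaux.mvn_conj_isometries (r₂ * u₁) t₂ hru₂ ht₂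
  have step6 : CHaux.HtpyProj (t₂ * star t₂) q := by
    apply CHaux.htpy_of_orth_mvn (CHaux.range_proj t₂ ht₂)
    · rw [mul_assoc, ht₂q0, mul_zero]
    · have h := CHaux.mvn_conj_isometries t₂ b ht₂ hb1
      rwa [hb2] at h
  exact ((((step1.trans step2).trans step3).trans step4).trans
    (step5.trans step6)).projHomotopic
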